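/- The function f(r) := rΨ₁(r) = r/(2μ(1 + (βr)^α)^{1/α}) maps the half-line [0, ∞) bijectively onto the half-open interval [0, 1/(2μβ)). -/

import Mathlib

/-- the function `f(r) = r/(2μ(1 + (βr)^α)^{1/α})` maps `[0, ∞)`
bijectively onto `[0, 1/(2μβ))`. -/
theorem strain_limiting_f_bijOn
    (μ β α : ℝ) (hμ : 0 < μ) (hβ : 0 < β) (hα : 0 < α)
    (f : ℝ → ℝ) (hf : ∀ r, f r = r / (2 * μ * (1 + (β * r) ^ α) ^ (1 / α))) :
    Set.BijOn f (Set.Ici (0 : ℝ)) (Set.Ico 0 (1 / (2 * μ * β))) := by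
  have hα' : α ≠ 0 := ne_of_gt hα
  -- positivity of the inner term and the denominator
  have hinner : ∀ r : ℝ, 0 ≤ r → (0 : ℝ) < 1 + (β * r) ^ α := by
    intro r hr
    have := Real.rpow_nonneg (mul_nonneg hβ.le hr) α
    linarith
  have hP : ∀ r : ℝ, 0 ≤ r → (0 : ℝ) < (1 + (β * r) ^ α) ^ (1 / α) :=
    fun r hr => Real.rpow_pos_of_pos (hinner r hr) _
  have hD : ∀ r : ℝ, 0 ≤ r → (0 : ℝ) < 2 * μ * (1 + (β * r) ^ α) ^ (1 / α) :=
    fun r hr => by positivity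
  -- strict monotonicity
  have hmono : ∀ a b : ℝ, 0 ≤ a → a < b → f a < f b := by
    intro a b ha hab
    have hb : 0 ≤ b := le_trans ha hab.le
    have hPa := hP a ha
    have hPb := hP b hb
    -- key inequality: a * P b < b * P a
    have key : a * (1 + (β * b) ^ α) ^ (1 / α) < b * (1 + (β * a) ^ α) ^ (1 / α) := by
      have h1 : (a * (1 + (β * b) ^ α) ^ (1 / α)) ^ α = a ^ α * (1 + (β * b) ^ α) := by
        rw [Real.mul_rpow ha (hP b hb).le, one_div, Real.rpow_inv_rpow (hinner b hb).le hα']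
      have h2 : (b * (1 + (β * a) ^ α) ^ (1 / α)) ^ α = b ^ α * (1 + (β * a) ^ α) := by
        rw [Real.mul_rpow hb (hP a ha).le, one_div, Real.rpow_inv_rpow (hinner a ha).le hα']
      have hexp : a ^ α * (1 + (β * b) ^ α) < b ^ α * (1 + (β * a) ^ α) := by
        have hab' : a ^ α < b ^ α := Real.rpow_lt_rpow ha hab hα
        have e1 : (β * a) ^ α = β ^ α * a ^ α := Real.mul_rpow hβ.le ha
        have e2 : (β * b) ^ α = β ^ α * b ^ α := Real.mul_rpow hβ.le hb
        rw [e1, e2]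
        nlinarith [Real.rpow_nonneg hβ.le α, Real.rpow_nonneg ha α, Real.rpow_nonneg hb α]
      have hlt : (a * (1 + (β * b) ^ α) ^ (1 / α)) ^ α < (b * (1 + (β * a) ^ α) ^ (1 / α)) ^ α := by
        rw [h1, h2]; exact hexp
      have hL : 0 ≤ a * (1 + (β * b) ^ α) ^ (1 / α) := mul_nonneg ha hPb.le
      have e1 : a * (1 + (β * b) ^ α) ^ (1 / α)
          = ((a * (1 + (β * b) ^ α) ^ (1 / α)) ^ α) ^ (1 / α) := by
        rw [one_div]
        exact (Real.rpow_rpow_inv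
          (mul_nonneg ha (Real.rpow_nonneg (hinner b hb).le _)) hα').symm
      have e2 : b * (1 + (β * a) ^ α) ^ (1 / α)
          = ((b * (1 + (β * a) ^ α) ^ (1 / α)) ^ α) ^ (1 / α) := by
        rw [one_div]
        exact (Real.rpow_rpow_inv
          (mul_nonneg hb (Real.rpow_nonneg (hinner a ha).le _)) hα').symm
      rw [e1, e2]
      exact Real.rpow_lt_rpow (Real.rpow_nonneg hL α) hlt (by positivity)
    rw [hf a, hf b, div_lt_div_iff₀ (hD a ha) (hD b hb)]
    nlinarith [key, hμ]
  -- maps to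
  have hmaps : Set.MapsTo f (Set.Ici (0 : ℝ)) (Set.Ico 0 (1 / (2 * μ * β))) := by
    intro r hr
    simp only [Set.mem_Ici] at hr
    constructor
    · rw [hf r]; exact div_nonneg hr (hD r hr).le
    · rw [hf r, div_lt_div_iff₀ (hD r hr) (by positivity)]
      have hkey : β * r < (1 + (β * r) ^ α) ^ (1 / α) := by
        have h1 : (β * r) ^ α < 1 + (β * r) ^ α := by linarith
        have := Real.rpow_lt_rpow (Real.rpow_nonneg (mul_nonneg hβ.le hr) α) h1
          (by positivity : (0:ℝ) < 1/α)
        rwa [one_div, Real.rpow_rpow_inv (mul_nonneg hβ.le hr) hα', ← one_div] at this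
      nlinarith [hP r hr, hμ]
  refine ⟨hmaps, ?_, ?_⟩
  · -- injectivity
    intro a ha b hb hfab
    simp only [Set.mem_Ici] at ha hb
    rcases lt_trichotomy a b with h | h | h
    · exact absurd hfab (ne_of_lt (hmono a b ha h))
    · exact h
    · exact absurd hfab.symm (ne_of_lt (hmono b a hb h))
  · -- surjectivity
    intro y hy
    obtain ⟨hy0, hy1⟩ := hy
    set c : ℝ := 2 * μ * β * y with hc_def
    have hc0 : 0 ≤ c := by positivity
    have hc1 : c < 1 := by
      rw [lt_div_iff₀ (by positivity : (0:ℝ) < 2 * μ * β)] at hy1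
      nlinarith
    rcases eq_or_lt_of_le hc0 with hc | hc
    · -- c = 0, so y = 0
      have hy0' : y = 0 := by
        have h2 : (0:ℝ) < 2 * μ * β := by positivity
        rw [hc_def] at hc
        nlinarith [hc]
      refine ⟨0, Set.self_mem_Ici, ?_⟩
      rw [hf 0, hy0']
      simp
    · -- 0 < c
      have hcα0 : 0 < c ^ α := Real.rpow_pos_of_pos hc α
      have hcα1 : c ^ α < 1 := by
        have := Real.rpow_lt_rpow hc0 hc1 hα
        rwa [Real.one_rpow] at this
      have hden : (0:ℝ) < 1 - c ^ α := by linarith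
      set x : ℝ := (c ^ α / (1 - c ^ α)) ^ (1 / α) with hx_def
      have hx0 : 0 ≤ x := Real.rpow_nonneg (div_nonneg hcα0.le hden.le) _
      refine ⟨x / β, by simpa using div_nonneg hx0 hβ.le, ?_⟩
      have hβr : β * (x / β) = x := by field_simp
      have hxα : x ^ α = c ^ α / (1 - c ^ α) := by
        rw [hx_def, one_div, Real.rpow_inv_rpow (div_nonneg hcα0.le hden.le) hα']
      have hsum : 1 + x ^ α = (1 - c ^ α)⁻¹ := by
        rw [hxα]; field_simp; ring
      -- x = c * ((1 - c^α)⁻¹)^(1/α)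
      have hx_eq : x = c * ((1 - c ^ α)⁻¹) ^ (1 / α) := by
        rw [hx_def, div_eq_mul_inv, Real.mul_rpow hcα0.le (inv_nonneg.mpr hden.le),
          one_div, Real.rpow_rpow_inv hc0 hα']
      rw [hf, hβr, hsum]
      have hQ : (0:ℝ) < ((1 - c ^ α)⁻¹) ^ (1 / α) :=
        Real.rpow_pos_of_pos (by positivity) _
      rw [div_eq_iff (by positivity : 2 * μ * ((1 - c ^ α)⁻¹) ^ (1 / α) ≠ 0)]
      rw [hx_eq, hc_def]
      field_simp
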